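/- arXiv:1411.0301 — 3 statements merged into one kernel-verified Lean document; each statement's English description precedes it below -/
import Mathlib

section
/- The function u^m(t) := Σ_{k ∈ ℤ} G_{m−k}(2t/h²) u₀(kh) solves the semi-discrete heat equation d/dt u^m(t) = (1/h²)[u^{m+1}(t) + u^{m−1}(t) − 2u^m(t)] with initial data u^m(0) = u₀(mh), for bounded initial data u₀ ∈ L^∞(ℝ). -/
open Real

/-- Modified Bessel function of the first kind of nonnegative integer order. -/
noncomputable def besselI (n : ℕ) (α : ℝ) : ℝ :=
  ∑' m : ℕ, (α/2)^(2*m+n) / (Nat.factorial m * Nat.factorial (m+n))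

/-- Discrete heat kernel. -/
noncomputable def G (k : ℤ) (α : ℝ) : ℝ := Real.exp (-α) * besselI k.natAbs α

lemma fact_cast_pos (m : ℕ) : (0:ℝ) < (Nat.factorial m : ℝ) :=
  Nat.cast_pos.2 (Nat.factorial_pos m)

lemma fact_cast_one_le (m : ℕ) : (1:ℝ) ≤ (Nat.factorial m : ℝ) :=
  Nat.one_le_cast.2 (Nat.one_le_of_lt (Nat.lt_of_lt_of_le Nat.zero_lt_one (Nat.one_le_iff_ne_zero.2 (Nat.factorial_ne_zero m)))) 

lemma bessel_term_bound (n m : ℕ) (α : ℝ) :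
    |(α/2)^(2*m+n) / ((Nat.factorial m : ℝ) * (Nat.factorial (m+n) : ℝ))|
      ≤ (|α|/2)^n * ((α^2/4))^m / Nat.factorial m := by
  rw [abs_div, abs_pow]
  have h1 : |α/2|^(2*m+n) = (|α|/2)^n * (α^2/4)^m := by
    rw [abs_div, abs_two, pow_add, pow_mul, div_pow, sq_abs]
    norm_num [mul_comm]
  rw [h1]
  apply div_le_div_of_nonneg_left _ (fact_cast_pos m)
  · calc (Nat.factorial m : ℝ) = (Nat.factorial m : ℝ) * 1 := by ring
      _ ≤ (Nat.factorial m : ℝ) * (Nat.factorial (m+n) : ℝ) := by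
          exact mul_le_mul_of_nonneg_left (fact_cast_one_le _) (le_of_lt (fact_cast_pos m))
      _ ≤ |(Nat.factorial m : ℝ) * (Nat.factorial (m+n) : ℝ)| := le_abs_self _
  · positivity

lemma summable_bessel (n : ℕ) (α : ℝ) :
    Summable (fun m : ℕ => (α/2)^(2*m+n) / ((Nat.factorial m : ℝ) * (Nat.factorial (m+n) : ℝ))) := by
  have hsum : Summable (fun m : ℕ => (|α|/2)^n * (α^2/4)^m / (Nat.factorial m : ℝ)) :=
    ((Real.summable_pow_div_factorial (α^2/4)).mul_left ((|α|/2)^n)).congr (fun m => by ring)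
  apply Summable.of_norm_bounded hsum
  intro m
  rw [Real.norm_eq_abs]
  exact bessel_term_bound n m α

lemma besselI_zero (n : ℕ) : besselI n 0 = if n = 0 then 1 else 0 := by
  unfold besselI
  rw [tsum_eq_single 0]
  · cases n with
    | zero => norm_num
    | succ k => simp [zero_pow]
  · intro m hm
    simp [zero_pow, Nat.mul_ne_zero, hm]

lemma coeff_bound (A : ℝ) (hA : 1 ≤ A) (k : ℕ) : (k:ℝ) * (A/2)^(k-1) ≤ A^k := by
  have hA0 : (0:ℝ) < A := lt_of_lt_of_le one_pos hA
  cases k with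
  | zero => simp
  | succ j =>
    have h2 : ((j+1 : ℕ):ℝ) ≤ (2:ℝ)^j := by
      exact_mod_cast Nat.lt_two_pow_self (n := j)
    simp only [Nat.add_sub_cancel]
    calc ((j+1 : ℕ):ℝ) * (A/2)^j ≤ (2:ℝ)^j * (A/2)^j := by
          apply mul_le_mul_of_nonneg_right h2 (by positivity)
      _ = A^j := by rw [← mul_pow]; ring_nf
      _ ≤ A^(j+1) := by
          rw [pow_succ]
          nlinarith [pow_nonneg hA0.le j]

noncomputable def besselD (n : ℕ) (α : ℝ) : ℝ :=
  ∑' m : ℕ, ((2*m+n : ℕ) : ℝ) * (α/2)^(2*m+n-1) * (1/2) / (Nat.factorial m * Nat.factorial (m+n))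


section g
variable (n : ℕ) (α : ℝ)

noncomputable def g1 (m : ℕ) : ℝ :=
  (m:ℝ) * (α/2)^(2*m+n-1) * (1/2) / (Nat.factorial m * Nat.factorial (m+n))

noncomputable def g2 (m : ℕ) : ℝ :=
  ((m+n : ℕ):ℝ) * (α/2)^(2*m+n-1) * (1/2) / (Nat.factorial m * Nat.factorial (m+n))

lemma g1_succ (m : ℕ) :
    g1 n α (m+1) = (α/2)^(2*m+(n+1)) / ((Nat.factorial m : ℝ) * (Nat.factorial (m+(n+1)) : ℝ)) / 2 := by
  unfold g1
  have he : 2*(m+1)+n-1 = 2*m+(n+1) := by omega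
  have hf : m+1+n = m+(n+1) := by omega
  rw [he, hf, Nat.factorial_succ]
  have h1 : ((m+1 : ℕ):ℝ) ≠ 0 := by positivity
  have h2 : (Nat.factorial m : ℝ) ≠ 0 := (fact_cast_pos m).ne'
  have h3 : (Nat.factorial (m+(n+1)) : ℝ) ≠ 0 := (fact_cast_pos _).ne'
  push_cast
  field_simp

lemma summable_g1 : Summable (g1 n α) := by
  have hs1 : Summable (fun m => g1 n α (m+1)) := by
    apply ((summable_bessel (n+1) α).div_const 2).congr
    intro m
    exact (g1_succ n α m).symm
  exact (summable_nat_add_iff 1).1 hs1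

lemma tsum_g1 : ∑' m, g1 n α m = (∑' m : ℕ, (α/2)^(2*m+(n+1)) / ((Nat.factorial m : ℝ) * (Nat.factorial (m+(n+1)) : ℝ))) / 2 := by
  rw [Summable.tsum_eq_zero_add (summable_g1 n α)]
  have h0 : g1 n α 0 = 0 := by simp [g1]
  rw [h0, zero_add]
  rw [tsum_congr (g1_succ n α)]
  exact tsum_div_const

lemma g2_succ (m : ℕ) (n' : ℕ) :
    g2 (n'+1) α m = (α/2)^(2*m+n') / ((Nat.factorial m : ℝ) * (Nat.factorial (m+n') : ℝ)) / 2 := by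
  unfold g2
  have he : 2*m+(n'+1)-1 = 2*m+n' := by omega
  rw [he, show m+(n'+1) = (m+n')+1 from rfl, Nat.factorial_succ]
  have h1 : ((m+n'+1 : ℕ):ℝ) ≠ 0 := by positivity
  have h2 : (Nat.factorial m : ℝ) ≠ 0 := (fact_cast_pos m).ne'
  have h3 : (Nat.factorial (m+n') : ℝ) ≠ 0 := (fact_cast_pos _).ne'
  push_cast
  field_simp

lemma g2_zero_eq_g1 : g2 0 α = g1 0 α := by
  funext m
  simp [g1, g2]

lemma summable_g2 : Summable (g2 n α) := by
  cases n with
  | zero => rw [g2_zero_eq_g1]; exact summable_g1 0 α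
  | succ n' =>
    apply ((summable_bessel n' α).div_const 2).congr
    intro m
    exact (g2_succ α m n').symm

lemma besselD_split : besselD n α = ∑' m, g1 n α m + ∑' m, g2 n α m := by
  unfold besselD
  rw [← Summable.tsum_add (summable_g1 n α) (summable_g2 n α)]
  apply tsum_congr
  intro m
  unfold g1 g2
  push_cast
  ring

end g

lemma besselD_zero_eq (α : ℝ) : besselD 0 α = besselI 1 α := by
  rw [besselD_split, g2_zero_eq_g1, tsum_g1]
  unfold besselI
  ring

lemma besselD_succ_eq (n : ℕ) (α : ℝ) :
    besselD (n+1) α = (besselI (n+2) α + besselI n α) / 2 := by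
  rw [besselD_split, tsum_g1, tsum_congr (fun m => g2_succ α m n), tsum_div_const]
  unfold besselI
  ring

lemma hasDerivAt_bessel_term (n m : ℕ) (x : ℝ) :
    HasDerivAt (fun y : ℝ => (y/2)^(2*m+n) / ((Nat.factorial m : ℝ) * (Nat.factorial (m+n) : ℝ)))
      (((2*m+n : ℕ):ℝ) * (x/2)^(2*m+n-1) * (1/2) / ((Nat.factorial m : ℝ) * (Nat.factorial (m+n) : ℝ))) x := by
  have h2 : HasDerivAt (fun y : ℝ => y/2) (1/2) x := (hasDerivAt_id x).div_const 2
  exact (h2.pow (2*m+n)).div_const _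

lemma bessel_deriv_term_bound (n m : ℕ) (A : ℝ) (hA : 1 ≤ A) (y : ℝ) (hy : |y| ≤ A) :
    |((2*m+n : ℕ):ℝ) * (y/2)^(2*m+n-1) * (1/2) / ((Nat.factorial m : ℝ) * (Nat.factorial (m+n) : ℝ))|
      ≤ A^n * (A^2)^m / (Nat.factorial m : ℝ) := by
  have hA0 : (0:ℝ) < A := lt_of_lt_of_le one_pos hA
  set k := 2*m+n with hk
  have h1 : |((k : ℕ):ℝ) * (y/2)^(k-1) * (1/2) / ((Nat.factorial m : ℝ) * (Nat.factorial (m+n) : ℝ))|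
      = (k:ℝ) * (|y|/2)^(k-1) * (1/2) / ((Nat.factorial m : ℝ) * (Nat.factorial (m+n) : ℝ)) := by
    rw [abs_div, abs_mul, abs_mul, abs_pow, abs_div, abs_two]
    congr 2
    · rw [Nat.abs_cast]
    · norm_num
    · rw [abs_mul, Nat.abs_cast, Nat.abs_cast]
  rw [h1]
  have h2 : (k:ℝ) * (|y|/2)^(k-1) ≤ (k:ℝ) * (A/2)^(k-1) := by
    apply mul_le_mul_of_nonneg_left _ (Nat.cast_nonneg k)
    exact pow_le_pow_left₀ (by positivity) (by linarith) _
  have h3 : (k:ℝ) * (A/2)^(k-1) ≤ A^k := coeff_bound A hA k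
  have h4 : A^k = A^n * (A^2)^m := by rw [hk, pow_add, pow_mul]; ring
  have hfm := fact_cast_pos m
  have hfmn := fact_cast_pos (m+n)
  have hfmn1 : (1:ℝ) ≤ (Nat.factorial (m+n) : ℝ) := Nat.one_le_cast.2 (Nat.one_le_iff_ne_zero.2 (Nat.factorial_ne_zero _))
  calc (k:ℝ) * (|y|/2)^(k-1) * (1/2) / ((Nat.factorial m : ℝ) * (Nat.factorial (m+n) : ℝ))
      ≤ A^k * (1/2) / ((Nat.factorial m : ℝ) * (Nat.factorial (m+n) : ℝ)) := by
        gcongr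
        linarith
    _ ≤ A^k / (Nat.factorial m : ℝ) := by
        rw [div_le_div_iff₀ (by positivity) hfm]
        have hAk : (0:ℝ) ≤ A^k := by positivity
        nlinarith [mul_nonneg hAk hfm.le,
          mul_le_mul_of_nonneg_left hfmn1 (mul_nonneg hAk hfm.le)]
    _ = A^n * (A^2)^m / (Nat.factorial m : ℝ) := by rw [h4]

lemma hasDerivAt_besselI (n : ℕ) (α : ℝ) : HasDerivAt (besselI n) (besselD n α) α := by
  set A := |α| + 1 with hA
  have hA1 : 1 ≤ A := by have := abs_nonneg α; linarith
  have hmem : α ∈ Set.Ioo (-A) A := by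
    constructor <;> cases abs_cases α <;> simp_all <;> linarith
  have := hasDerivAt_tsum_of_isPreconnected
    (u := fun m : ℕ => A^n * (A^2)^m / (Nat.factorial m : ℝ))
    (g := fun m (y : ℝ) => (y/2)^(2*m+n) / ((Nat.factorial m : ℝ) * (Nat.factorial (m+n) : ℝ)))
    (g' := fun m (y : ℝ) => ((2*m+n : ℕ):ℝ) * (y/2)^(2*m+n-1) * (1/2) / ((Nat.factorial m : ℝ) * (Nat.factorial (m+n) : ℝ)))
    ?_ isOpen_Ioo ?_ ?_ ?_ hmem ?_ hmem
  · exact this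
  · exact ((Real.summable_pow_div_factorial (A^2)).mul_left (A^n)).congr (fun m => by ring)
  · exact (convex_Ioo _ _).isPreconnected
  · intro m y _
    exact hasDerivAt_bessel_term n m y
  · intro m y hy
    rw [Real.norm_eq_abs]
    apply bessel_deriv_term_bound n m A hA1 y
    rw [abs_le]
    exact ⟨hy.1.le, hy.2.le⟩
  · exact summable_bessel n α


noncomputable def expC (A : ℝ) : ℝ := ∑' m : ℕ, (A^2/4)^m / (Nat.factorial m : ℝ)

lemma besselD_natAbs (k : ℤ) (α : ℝ) :
    besselD k.natAbs α = (besselI (k+1).natAbs α + besselI (k-1).natAbs α) / 2 := by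
  rcases lt_trichotomy k 0 with hk | hk | hk
  · obtain ⟨n, hn⟩ : ∃ n : ℕ, k.natAbs = n + 1 := ⟨k.natAbs - 1, by omega⟩
    have h1 : (k+1).natAbs = n := by omega
    have h2 : (k-1).natAbs = n + 2 := by omega
    rw [hn, h1, h2, besselD_succ_eq, add_comm]
  · subst hk
    have h1 : ((0:ℤ)+1).natAbs = 1 := by omega
    have h2 : ((0:ℤ)-1).natAbs = 1 := by omega
    rw [show (0:ℤ).natAbs = 0 from rfl, h1, h2, besselD_zero_eq]
    ring
  · obtain ⟨n, hn⟩ : ∃ n : ℕ, k.natAbs = n + 1 := ⟨k.natAbs - 1, by omega⟩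
    have h1 : (k+1).natAbs = n + 2 := by omega
    have h2 : (k-1).natAbs = n := by omega
    rw [hn, h1, h2, besselD_succ_eq]

lemma hasDerivAt_G (k : ℤ) (α : ℝ) :
    HasDerivAt (G k) ((G (k+1) α + G (k-1) α)/2 - G k α) α := by
  have hexp : HasDerivAt (fun a : ℝ => Real.exp (-a)) (-Real.exp (-α)) α := by
    have h1 : HasDerivAt (fun a : ℝ => -a) (-1) α := (hasDerivAt_id α).neg
    simpa using h1.exp
  have hI := hasDerivAt_besselI k.natAbs α
  have := hexp.mul hI
  have heq : -Real.exp (-α) * besselI k.natAbs α + Real.exp (-α) * besselD k.natAbs α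
      = (G (k+1) α + G (k-1) α)/2 - G k α := by
    rw [besselD_natAbs]
    unfold G
    ring
  rw [heq] at this
  exact this

lemma besselI_nonneg (n : ℕ) (α : ℝ) (h0 : 0 ≤ α) : 0 ≤ besselI n α := by
  apply tsum_nonneg
  intro m
  positivity

lemma expC_nonneg (A : ℝ) : 0 ≤ expC A := by
  apply tsum_nonneg
  intro m
  positivity

lemma besselI_le (n : ℕ) (α A : ℝ) (h0 : 0 ≤ α) (hA : α ≤ A) :
    besselI n α ≤ (A/2)^n / (Nat.factorial n : ℝ) * expC A := by
  have hA0 : 0 ≤ A := le_trans h0 hA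
  unfold besselI expC
  rw [← tsum_mul_left]
  apply Summable.tsum_le_tsum _ (summable_bessel n α)
  · exact ((Real.summable_pow_div_factorial (A^2/4)).mul_left ((A/2)^n / (Nat.factorial n : ℝ))).congr (fun m => by ring)
  · intro m
    have hfn1 : (Nat.factorial n : ℝ) ≤ (Nat.factorial (m+n) : ℝ) :=
      Nat.cast_le.2 (Nat.factorial_le (Nat.le_add_left n m))
    have key : (α/2)^(2*m+n) ≤ (A/2)^n * (A^2/4)^m := by
      calc (α/2)^(2*m+n) ≤ (A/2)^(2*m+n) := by
            apply pow_le_pow_left₀ (by positivity) (by linarith)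
        _ = (A/2)^n * (A^2/4)^m := by
            rw [pow_add, pow_mul, show ((A:ℝ)/2)^2 = A^2/4 by ring]
            ring
    calc (α/2)^(2*m+n) / ((Nat.factorial m : ℝ) * (Nat.factorial (m+n) : ℝ))
        ≤ ((A/2)^n * (A^2/4)^m) / ((Nat.factorial m : ℝ) * (Nat.factorial n : ℝ)) := by
          apply div_le_div₀ (by positivity) key (by positivity)
          exact mul_le_mul_of_nonneg_left hfn1 (fact_cast_pos m).le
      _ = (A/2)^n / (Nat.factorial n : ℝ) * ((A^2/4)^m / (Nat.factorial m : ℝ)) := by ring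
  
lemma G_nonneg (k : ℤ) (α : ℝ) (h0 : 0 ≤ α) : 0 ≤ G k α :=
  mul_nonneg (Real.exp_nonneg _) (besselI_nonneg _ _ h0)

lemma G_le (k : ℤ) (α A : ℝ) (h0 : 0 ≤ α) (hA : α ≤ A) :
    G k α ≤ (A/2)^k.natAbs / (Nat.factorial k.natAbs : ℝ) * expC A := by
  calc G k α ≤ 1 * besselI k.natAbs α := by
        apply mul_le_mul_of_nonneg_right _ (besselI_nonneg _ _ h0)
        rw [show (1:ℝ) = Real.exp 0 from (Real.exp_zero).symm]
        exact Real.exp_le_exp.2 (by linarith)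
    _ = besselI k.natAbs α := one_mul _
    _ ≤ _ := besselI_le _ _ _ h0 hA

lemma summable_bnd (A : ℝ) :
    Summable (fun k : ℤ => (A/2)^k.natAbs / (Nat.factorial k.natAbs : ℝ) * expC A) := by
  apply Summable.mul_right
  apply Summable.of_nat_of_neg_add_one
  · exact (Real.summable_pow_div_factorial (A/2)).congr (fun n => by simp)
  · have := (summable_nat_add_iff 1).2 (Real.summable_pow_div_factorial (A/2))
    apply this.congr
    intro n
    have : ((-(n+1) : ℤ)).natAbs = n + 1 := by omega
    rw [this]

lemma summable_G_mul (j : ℤ) (α A : ℝ) (h0 : 0 ≤ α) (hA : α ≤ A)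
    (u₀ : ℝ → ℝ) (M : ℝ) (hM : ∀ x, |u₀ x| ≤ M) (h : ℝ) :
    Summable (fun k : ℤ => G (j - k) α * u₀ (k*h)) := by
  apply Summable.of_norm_bounded
    (g := fun k : ℤ => (A/2)^(j-k).natAbs / (Nat.factorial (j-k).natAbs : ℝ) * expC A * M)
  · have h2 : Function.Injective (fun k : ℤ => j - k) := fun a b hab => by
      simpa using hab
    exact (((summable_bnd A).mul_right M).comp_injective h2).congr (fun k => rfl)
  · intro k
    rw [Real.norm_eq_abs, abs_mul]
    have hG0 := G_nonneg (j-k) α h0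
    have hGle := G_le (j-k) α A h0 hA
    have hb0 : 0 ≤ (A/2)^(j-k).natAbs / (Nat.factorial (j-k).natAbs : ℝ) * expC A :=
      le_trans hG0 hGle
    rw [abs_of_nonneg hG0]
    exact mul_le_mul hGle (hM _) (abs_nonneg _) hb0

lemma summable_bnd_shift (A : ℝ) (j : ℤ) :
    Summable (fun k : ℤ => (A/2)^(j-k).natAbs / (Nat.factorial (j-k).natAbs : ℝ) * expC A) := by
  have h2 : Function.Injective (fun k : ℤ => j - k) := fun a b hab => by simpa using hab
  exact ((summable_bnd A).comp_injective h2).congr (fun k => rfl)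

/-- The convolution of the discrete heat kernel with the initial data solves
the semi-discrete heat equation. -/
theorem semidiscrete_heat_solution (h : ℝ) (hh : 0 < h) (u₀ : ℝ → ℝ)
    (hb : ∃ M, ∀ x, |u₀ x| ≤ M) :
    (∀ m : ℤ, (fun t : ℝ => ∑' k : ℤ, G (m - k) (2*t/h^2) * u₀ (k*h)) 0 = u₀ (m*h)) ∧
    (∀ m : ℤ, ∀ t : ℝ, 0 < t →
      HasDerivAt (fun t : ℝ => ∑' k : ℤ, G (m - k) (2*t/h^2) * u₀ (k*h))
        ((1/h^2) * ((∑' k : ℤ, G (m+1 - k) (2*t/h^2) * u₀ (k*h))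
          + (∑' k : ℤ, G (m-1 - k) (2*t/h^2) * u₀ (k*h))
          - 2 * ∑' k : ℤ, G (m - k) (2*t/h^2) * u₀ (k*h))) t) := by
  obtain ⟨M, hM⟩ := hb
  have hM0 : 0 ≤ M := le_trans (abs_nonneg _) (hM 0)
  have hh2 : (0:ℝ) < h^2 := by positivity
  constructor
  · -- initial condition
    intro m
    simp only
    have h0 : 2*(0:ℝ)/h^2 = 0 := by simp
    rw [h0]
    rw [tsum_eq_single m]
    · have : G (m - m) 0 = 1 := by
        simp only [sub_self]
        unfold G
        rw [besselI_zero]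
        simp
      rw [this, one_mul]
    · intro k hk
      have hne : (m - k).natAbs ≠ 0 := by omega
      have : G (m - k) 0 = 0 := by
        unfold G
        rw [besselI_zero]
        simp [hne]
      rw [this, zero_mul]
  · -- derivative
    intro m t ht
    have hα0 : 0 < 2*t/h^2 := by positivity
    set α := 2*t/h^2 with hα
    set A := α + 1 with hAdef
    have hαA : α < A := by simp [hAdef]
    have hmem : α ∈ Set.Ioo (0:ℝ) A := ⟨hα0, hαA⟩
    -- summable bound for derivatives
    have hbndsum : Summable (fun k : ℤ =>
        (((A/2)^(m-k+1).natAbs / (Nat.factorial (m-k+1).natAbs : ℝ) * expC A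
          + (A/2)^(m-k-1).natAbs / (Nat.factorial (m-k-1).natAbs : ℝ) * expC A)/2
          + (A/2)^(m-k).natAbs / (Nat.factorial (m-k).natAbs : ℝ) * expC A) * M) := by
      have s1 : Summable (fun k : ℤ =>
          (A/2)^(m-k+1).natAbs / (Nat.factorial (m-k+1).natAbs : ℝ) * expC A) :=
        (summable_bnd_shift A (m+1)).congr
          (fun k => by rw [show m+1-k = m-k+1 by ring])
      have s2 : Summable (fun k : ℤ =>
          (A/2)^(m-k-1).natAbs / (Nat.factorial (m-k-1).natAbs : ℝ) * expC A) :=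
        (summable_bnd_shift A (m-1)).congr
          (fun k => by rw [show m-1-k = m-k-1 by ring])
      have s3 := summable_bnd_shift A m
      exact (((s1.add s2).div_const 2).add s3).mul_right M
    have key : HasDerivAt (fun s : ℝ => ∑' k : ℤ, G (m-k) s * u₀ (k*h))
        (∑' k : ℤ, ((G (m-k+1) α + G (m-k-1) α)/2 - G (m-k) α) * u₀ (k*h)) α := by
      apply hasDerivAt_tsum_of_isPreconnected hbndsum isOpen_Ioo
        (convex_Ioo (0:ℝ) A).isPreconnected
        (g := fun (k : ℤ) (y : ℝ) => G (m-k) y * u₀ (k*h))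
        (g' := fun (k : ℤ) (y : ℝ) => ((G (m-k+1) y + G (m-k-1) y)/2 - G (m-k) y) * u₀ (k*h))
        ?_ ?_ hmem ?_ hmem
      · intro k y _
        exact (hasDerivAt_G (m-k) y).mul_const _
      · intro k y hy
        have hy0 : (0:ℝ) ≤ y := hy.1.le
        have hyA : y ≤ A := hy.2.le
        rw [Real.norm_eq_abs, abs_mul]
        have b1 := G_le (m-k+1) y A hy0 hyA
        have b2 := G_le (m-k-1) y A hy0 hyA
        have b3 := G_le (m-k) y A hy0 hyA
        have n1 := G_nonneg (m-k+1) y hy0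
        have n2 := G_nonneg (m-k-1) y hy0
        have n3 := G_nonneg (m-k) y hy0
        have habs : |((G (m-k+1) y + G (m-k-1) y)/2 - G (m-k) y)|
            ≤ ((A/2)^(m-k+1).natAbs / (Nat.factorial (m-k+1).natAbs : ℝ) * expC A
              + (A/2)^(m-k-1).natAbs / (Nat.factorial (m-k-1).natAbs : ℝ) * expC A)/2
              + (A/2)^(m-k).natAbs / (Nat.factorial (m-k).natAbs : ℝ) * expC A := by
          rw [abs_sub_comm]
          calc |G (m-k) y - (G (m-k+1) y + G (m-k-1) y)/2|
              ≤ |G (m-k) y| + |(G (m-k+1) y + G (m-k-1) y)/2| := abs_sub _ _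
            _ = G (m-k) y + (G (m-k+1) y + G (m-k-1) y)/2 := by
                rw [abs_of_nonneg n3, abs_of_nonneg (by linarith)]
            _ ≤ _ := by
                rw [add_comm]
                gcongr
        exact mul_le_mul habs (hM _) (abs_nonneg _) (le_trans (abs_nonneg _) habs)
      · simpa using summable_G_mul m α A hα0.le hαA.le u₀ M hM h
    have hlin : HasDerivAt (fun s : ℝ => 2*s/h^2) (2/h^2) t := by
      simpa using ((hasDerivAt_id t).const_mul 2).div_const (h^2)
    have hcomp := HasDerivAt.comp t key hlin
    -- summability at α for splitting
    have hs0 : Summable (fun k : ℤ => G (m-k) α * u₀ (k*h)) :=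
      summable_G_mul m α A hα0.le hαA.le u₀ M hM h
    have hsp : Summable (fun k : ℤ => G (m-k+1) α * u₀ (k*h)) :=
      (summable_G_mul (m+1) α A hα0.le hαA.le u₀ M hM h).congr
        (fun k => by rw [show m+1-k = m-k+1 by ring])
    have hsm : Summable (fun k : ℤ => G (m-k-1) α * u₀ (k*h)) :=
      (summable_G_mul (m-1) α A hα0.le hαA.le u₀ M hM h).congr
        (fun k => by rw [show m-1-k = m-k-1 by ring])
    have hval : (∑' k : ℤ, ((G (m-k+1) α + G (m-k-1) α)/2 - G (m-k) α) * u₀ (k*h)) * (2/h^2)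
        = (1/h^2) * ((∑' k : ℤ, G (m+1-k) α * u₀ (k*h))
          + (∑' k : ℤ, G (m-1-k) α * u₀ (k*h))
          - 2 * ∑' k : ℤ, G (m-k) α * u₀ (k*h)) := by
      have hsplit : (∑' k : ℤ, ((G (m-k+1) α + G (m-k-1) α)/2 - G (m-k) α) * u₀ (k*h))
          = ((∑' k : ℤ, G (m-k+1) α * u₀ (k*h)) + (∑' k : ℤ, G (m-k-1) α * u₀ (k*h)))/2
            - ∑' k : ℤ, G (m-k) α * u₀ (k*h) := by
        rw [tsum_congr (fun k : ℤ => show ((G (m-k+1) α + G (m-k-1) α)/2 - G (m-k) α) * u₀ (k*h)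
            = (G (m-k+1) α * u₀ (k*h) + G (m-k-1) α * u₀ (k*h))/2 - G (m-k) α * u₀ (k*h) by ring)]
        rw [Summable.tsum_sub ((hsp.add hsm).div_const 2) hs0]
        rw [tsum_div_const, Summable.tsum_add hsp hsm]
      rw [hsplit]
      rw [tsum_congr (fun k : ℤ => show G (m+1-k) α * u₀ (k*h) = G (m-k+1) α * u₀ (k*h)
            by rw [show m+1-k = m-k+1 by ring])]
      rw [tsum_congr (fun k : ℤ => show G (m-1-k) α * u₀ (k*h) = G (m-k-1) α * u₀ (k*h)
            by rw [show m-1-k = m-k-1 by ring])]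
      ring
    rw [hval] at hcomp
    exact hcomp
end

section
/- If μκ → 0 then the discrete normal velocity n₀ defined by the inequality Φ(n₀,μ,κ) ≤ 0 < Φ(n₀+1,μ,κ) equals 0; i.e., there is δ > 0 such that whenever 0 < μκ < δ, one has (1/2)∫₀^{√(2/(μκ))} e^{-x²/4} dx > (1/2)∫_{√(2/(μκ))}^∞ e^{-x²/4} dx + Σ_{k=2}^∞ ∫_{√(2k/(μκ))}^∞ e^{-x²/4} dx. -/
open MeasureTheory Real Set

lemma gauss_eq : (fun x : ℝ => Real.exp (-x^2/4)) = fun x => Real.exp (-(1/4) * x^2) := by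
  funext x; ring_nf

lemma gauss_integrable : Integrable (fun x : ℝ => Real.exp (-x^2/4)) := by
  rw [gauss_eq]; exact integrable_exp_neg_mul_sq (by norm_num)

lemma tail_bound {s : ℝ} (hs : 0 ≤ s) :
    ∫ x in Ioi s, Real.exp (-x^2/4) ≤ 6 * Real.exp (-s^2/8) := by
  have h8 : Integrable (fun x : ℝ => Real.exp (-(1/8) * x^2)) :=
    integrable_exp_neg_mul_sq (by norm_num)
  have step1 : ∫ x in Ioi s, Real.exp (-x^2/4)
      ≤ ∫ x in Ioi s, Real.exp (-s^2/8) * Real.exp (-(1/8) * x^2) := by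
    apply setIntegral_mono_on gauss_integrable.integrableOn
      ((h8.integrableOn).const_mul _) measurableSet_Ioi
    intro x hx
    have hx' : s ≤ x := le_of_lt hx
    rw [← Real.exp_add]
    apply Real.exp_le_exp.2
    nlinarith
  have step2 : ∫ x in Ioi s, Real.exp (-s^2/8) * Real.exp (-(1/8) * x^2)
      = Real.exp (-s^2/8) * ∫ x in Ioi s, Real.exp (-(1/8) * x^2) := by
    exact integral_const_mul _ _
  have step3 : ∫ x in Ioi s, Real.exp (-(1/8) * x^2) ≤ 6 := by
    have h1 : ∫ x in Ioi s, Real.exp (-(1/8) * x^2) ≤ ∫ x : ℝ, Real.exp (-(1/8) * x^2) := by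
      apply setIntegral_le_integral h8
      filter_upwards with x using (Real.exp_pos _).le
    have h2 : ∫ x : ℝ, Real.exp (-(1/8) * x^2) = Real.sqrt (π / (1/8)) :=
      integral_gaussian _
    have h3 : Real.sqrt (π / (1/8)) ≤ 6 := by
      have : π / (1/8) ≤ 36 := by nlinarith [Real.pi_le_four]
      calc Real.sqrt (π / (1/8)) ≤ Real.sqrt 36 := Real.sqrt_le_sqrt this
        _ = 6 := by
          rw [show (36:ℝ) = 6^2 by norm_num, Real.sqrt_sq]; norm_num
    linarith [h1, h2 ▸ h1]
  calc ∫ x in Ioi s, Real.exp (-x^2/4)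
      ≤ Real.exp (-s^2/8) * ∫ x in Ioi s, Real.exp (-(1/8) * x^2) := by
        rw [← step2]; exact step1
    _ ≤ Real.exp (-s^2/8) * 6 := by
        exact mul_le_mul_of_nonneg_left step3 (Real.exp_pos _).le
    _ = 6 * Real.exp (-s^2/8) := by ring

set_option maxHeartbeats 1000000 in
/-- Complete pinning in the super-critical regime: for `μκ` small enough the
discrete normal velocity is `0`. -/
theorem pinning_for_small_mu_kappa :
    ∃ δ > (0:ℝ), ∀ μ κ : ℝ, 0 < μ → 0 < κ → μ * κ < δ →
      (1/2) * ∫ x in (0:ℝ)..(Real.sqrt (2/(μ*κ))), Real.exp (-x^2/4)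
        > (1/2) * (∫ x in Ioi (Real.sqrt (2/(μ*κ))), Real.exp (-x^2/4))
          + ∑' j : ℕ, ∫ x in Ioi (Real.sqrt (2*(j+2)/(μ*κ))), Real.exp (-x^2/4) := by
  refine ⟨1/100, by norm_num, ?_⟩
  intro μ κ hμ hκ hlt
  set c := μ * κ with hc
  have hc0 : 0 < c := mul_pos hμ hκ
  have hcont : Continuous fun x : ℝ => Real.exp (-x^2/4) := by continuity
  have h100 : (100:ℝ) ≤ 1/c := by
    rw [le_div_iff₀ hc0]; nlinarith
  -- LHS lower bound
  set t := Real.sqrt (2 / c) with ht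
  have ht2 : t^2 = 2 / c := Real.sq_sqrt (by positivity)
  have ht1 : 1 ≤ t := by
    rw [ht, show (1:ℝ) = Real.sqrt 1 by simp]
    apply Real.sqrt_le_sqrt
    rw [le_div_iff₀ hc0]; nlinarith
  have hLB : (3:ℝ)/4 ≤ ∫ x in (0:ℝ)..t, Real.exp (-x^2/4) := by
    have hint : ∀ a b : ℝ, IntervalIntegrable (fun x : ℝ => Real.exp (-x^2/4)) volume a b :=
      fun a b => hcont.intervalIntegrable a b
    have h1 : (3:ℝ)/4 ≤ ∫ x in (0:ℝ)..1, Real.exp (-x^2/4) := by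
      have := intervalIntegral.integral_mono_on (μ := volume)
        (f := fun _ : ℝ => (3:ℝ)/4) (g := fun x : ℝ => Real.exp (-x^2/4))
        (by norm_num) (intervalIntegrable_const) (hint 0 1) ?_
      · simpa using this
      · intro x hx
        simp only [mem_Icc] at hx
        have := Real.add_one_le_exp (-x^2/4)
        nlinarith
    have h2 : (0:ℝ) ≤ ∫ x in (1:ℝ)..t, Real.exp (-x^2/4) :=
      intervalIntegral.integral_nonneg ht1 (fun x _ => (Real.exp_pos _).le)
    have h3 : ∫ x in (0:ℝ)..t, Real.exp (-x^2/4)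
        = (∫ x in (0:ℝ)..1, Real.exp (-x^2/4)) + ∫ x in (1:ℝ)..t, Real.exp (-x^2/4) :=
      (intervalIntegral.integral_add_adjacent_intervals (hint 0 1) (hint 1 t)).symm
    linarith
  -- exp(-25) bound
  have hexp25 : Real.exp (-25) ≤ 1/26 := by
    have h : (26:ℝ) ≤ Real.exp 25 := by linarith [Real.add_one_le_exp (25:ℝ)]
    have hmul : Real.exp (-25) * Real.exp 25 = 1 := by rw [← Real.exp_add]; norm_num
    nlinarith [Real.exp_pos (-25)]
  -- half-tail bound
  have hterm1 : ∫ x in Ioi t, Real.exp (-x^2/4) ≤ 6 * Real.exp (-25) := by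
    have hb := tail_bound (Real.sqrt_nonneg (2/c))
    have hle : Real.exp (-t^2/8) ≤ Real.exp (-25) := by
      apply Real.exp_le_exp.2
      rw [ht2]
      have : 2/c = 2*(1/c) := by ring
      nlinarith
    calc ∫ x in Ioi t, Real.exp (-x^2/4) ≤ 6 * Real.exp (-t^2/8) := hb
      _ ≤ 6 * Real.exp (-25) := by nlinarith [Real.exp_pos (-t^2/8)]
  -- tsum bound
  set f : ℕ → ℝ := fun j => ∫ x in Ioi (Real.sqrt (2*(j+2)/c)), Real.exp (-x^2/4) with hfdef
  have hfnn : ∀ j, 0 ≤ f j :=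
    fun j => setIntegral_nonneg measurableSet_Ioi (fun x _ => (Real.exp_pos _).le)
  have hfg : ∀ j : ℕ, f j ≤ 6 * Real.exp (-50) * Real.exp (-25) ^ j := by
    intro j
    have hb := tail_bound (Real.sqrt_nonneg (2*((j:ℝ)+2)/c))
    have hsq : Real.sqrt (2*((j:ℝ)+2)/c) ^ 2 = 2*((j:ℝ)+2)/c := Real.sq_sqrt (by positivity)
    have hexpb : Real.exp (-(Real.sqrt (2*((j:ℝ)+2)/c))^2/8)
        ≤ Real.exp (-50) * Real.exp (-25) ^ j := by
      rw [← Real.exp_nat_mul, ← Real.exp_add]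
      apply Real.exp_le_exp.2
      rw [hsq]
      have hj : (0:ℝ) ≤ (j:ℝ) := Nat.cast_nonneg j
      have h3 : ((j:ℝ)+2)*100 ≤ ((j:ℝ)+2)*(1/c) := by nlinarith
      have h4 : 2*((j:ℝ)+2)/c/8 = ((j:ℝ)+2)*(1/c)/4 := by ring
      linarith
    calc f j ≤ 6 * Real.exp (-(Real.sqrt (2*((j:ℝ)+2)/c))^2/8) := hb
      _ ≤ 6 * (Real.exp (-50) * Real.exp (-25) ^ j) := by
          nlinarith [Real.exp_pos (-(Real.sqrt (2*((j:ℝ)+2)/c))^2/8)]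
      _ = 6 * Real.exp (-50) * Real.exp (-25) ^ j := by ring
  have hglt : Real.exp (-25) < 1 := by nlinarith
  have hg : Summable fun j : ℕ => 6 * Real.exp (-50) * Real.exp (-25) ^ j :=
    (summable_geometric_of_lt_one (Real.exp_pos _).le hglt).mul_left _
  have hsumf : Summable f := Summable.of_nonneg_of_le hfnn hfg hg
  have htsum : ∑' j, f j ≤ 6 * Real.exp (-50) * (1 - Real.exp (-25))⁻¹ := by
    calc ∑' j, f j ≤ ∑' j : ℕ, 6 * Real.exp (-50) * Real.exp (-25) ^ j :=
          Summable.tsum_le_tsum hfg hsumf hg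
      _ = 6 * Real.exp (-50) * ∑' j : ℕ, Real.exp (-25) ^ j := tsum_mul_left
      _ = 6 * Real.exp (-50) * (1 - Real.exp (-25))⁻¹ := by
          rw [tsum_geometric_of_lt_one (Real.exp_pos _).le hglt]
  -- finish
  have hpos : (0:ℝ) < 1 - Real.exp (-25) := by linarith
  have hinv : (1 - Real.exp (-25))⁻¹ ≤ 26/25 := by
    rw [inv_le_comm₀ hpos (by norm_num)]
    linarith
  have h50 : Real.exp (-50) = Real.exp (-25) * Real.exp (-25) := by
    rw [← Real.exp_add]; norm_num
  have htsum2 : ∑' j, f j ≤ 1/100 := by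
    have h1 : 6 * Real.exp (-50) * (1 - Real.exp (-25))⁻¹
        ≤ 6 * (1/26 * (1/26)) * (26/25) := by
      have he : Real.exp (-50) ≤ 1/26 * (1/26) := by
        rw [h50]; nlinarith [Real.exp_pos (-25)]
      have hinvpos : (0:ℝ) < (1 - Real.exp (-25))⁻¹ := inv_pos.2 hpos
      nlinarith [Real.exp_pos (-50)]
    have : 6 * ((1:ℝ)/26 * (1/26)) * (26/25) ≤ 1/100 := by norm_num
    linarith
  have hterm1' : (1/2:ℝ) * (∫ x in Ioi t, Real.exp (-x^2/4)) ≤ 3/26 := by linarith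
  linarith
end

section
/- lim_{n→∞} (1/n) Σ_{k=1}^{n} ∫₀^{√(2k/n)} e^{-x²/4} dx = lim_{n→∞} (1/n) Σ_{k=n}^∞ ∫_{√(2k/n)}^∞ e^{-x²/4} dx; that is, these two limits exist and are equal. -/
open MeasureTheory Real Set Filter

noncomputable def gf (x : ℝ) : ℝ := Real.exp (-x^2/4)

lemma gf_cont : Continuous gf := by unfold gf; fun_prop
lemma gf_nonneg : ∀ x, 0 ≤ gf x := fun x => (Real.exp_pos _).le
lemma gf_integrable : Integrable gf := by
  have h := integrable_exp_neg_mul_sq (show (0:ℝ) < 1/4 by norm_num)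
  have : (fun x : ℝ => Real.exp (-(1/4) * x^2)) = gf := by
    funext x; unfold gf; ring_nf
  rwa [this] at h

noncomputable def Efun (y : ℝ) : ℝ := ∫ x in (0:ℝ)..y, gf x
noncomputable def Afun (t : ℝ) : ℝ := Efun (Real.sqrt (2*t))
noncomputable def Tfun (t : ℝ) : ℝ := ∫ x in Ioi (Real.sqrt (2*t)), gf x

lemma hE (y : ℝ) : HasDerivAt Efun (gf y) y := by
  refine intervalIntegral.integral_hasDerivAt_right
    (gf_integrable.intervalIntegrable) ?_ gf_cont.continuousAt
  exact gf_cont.stronglyMeasurableAtFilter _ _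

lemma E_cont : Continuous Efun := by
  have : ∀ y, ContinuousAt Efun y := fun y => (hE y).continuousAt
  exact continuous_iff_continuousAt.2 this

lemma E_mono : Monotone Efun := by
  intro y z hyz
  have h1 : Efun z - Efun y = ∫ x in y..z, gf x := by
    unfold Efun
    rw [eq_comm, intervalIntegral.integral_interval_sub_left
      gf_integrable.intervalIntegrable gf_integrable.intervalIntegrable]
  have h2 : 0 ≤ ∫ x in y..z, gf x :=
    intervalIntegral.integral_nonneg hyz (fun x _ => gf_nonneg x)
  linarith

lemma A_mono : Monotone Afun := fun t s hts =>
  E_mono (Real.sqrt_le_sqrt (by linarith))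

lemma A_zero : Afun 0 = 0 := by
  unfold Afun Efun
  simp

lemma A_cont : Continuous Afun :=
  E_cont.comp (Real.continuous_sqrt.comp (continuous_const.mul continuous_id))

lemma T_nonneg (t : ℝ) : 0 ≤ Tfun t :=
  setIntegral_nonneg measurableSet_Ioi (fun x _ => gf_nonneg x)

lemma T_anti : Antitone Tfun := by
  intro t s hts
  apply setIntegral_mono_set (gf_integrable.integrableOn)
    (Filter.Eventually.of_forall gf_nonneg)
  exact HasSubset.Subset.eventuallyLE (Ioi_subset_Ioi (Real.sqrt_le_sqrt (by linarith)))

lemma T_eq_sub (t : ℝ) (ht : 0 ≤ t) :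
    Tfun t = (∫ x in Ioi (0:ℝ), gf x) - Afun t := by
  have hc : 0 ≤ Real.sqrt (2*t) := Real.sqrt_nonneg _
  have hsplit : (∫ x in Ioi (0:ℝ), gf x)
      = (∫ x in Ioc (0:ℝ) (Real.sqrt (2*t)), gf x) + Tfun t := by
    unfold Tfun
    rw [← setIntegral_union (Ioc_disjoint_Ioi le_rfl) measurableSet_Ioi
      gf_integrable.integrableOn gf_integrable.integrableOn,
      Ioc_union_Ioi_eq_Ioi hc]
  have hA : Afun t = ∫ x in Ioc (0:ℝ) (Real.sqrt (2*t)), gf x := by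
    unfold Afun Efun
    rw [intervalIntegral.integral_of_le hc]
  rw [hA]; linarith

lemma sq_sqrt2t {t : ℝ} (ht : 0 < t) : Real.sqrt (2*t) ^ 2 = 2*t :=
  Real.sq_sqrt (by linarith)

lemma sqrt2t_pos {t : ℝ} (ht : 0 < t) : 0 < Real.sqrt (2*t) :=
  Real.sqrt_pos.2 (by linarith)

lemma hsqrt2t (t : ℝ) (ht : 0 < t) :
    HasDerivAt (fun u : ℝ => Real.sqrt (2*u)) (1 / Real.sqrt (2*t)) t := by
  have h1 : HasDerivAt (fun u : ℝ => 2*u) 2 t := by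
    simpa using (hasDerivAt_id t).const_mul 2
  have h2 := (Real.hasDerivAt_sqrt (show 2*t ≠ 0 by positivity)).comp t h1
  refine h2.congr_deriv ?_
  rw [div_mul_eq_mul_div, mul_comm]
  ring

lemma gf_sqrt {t : ℝ} (ht : 0 ≤ t) : gf (Real.sqrt (2*t)) = Real.exp (-t/2) := by
  unfold gf
  rw [Real.sq_sqrt (by linarith)]
  ring_nf

lemma hA' (t : ℝ) (ht : 0 < t) :
    HasDerivAt Afun (Real.exp (-t/2) / Real.sqrt (2*t)) t := by
  have h := (hE (Real.sqrt (2*t))).comp t (hsqrt2t t ht)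
  have : gf (Real.sqrt (2*t)) * (1 / Real.sqrt (2*t))
      = Real.exp (-t/2) / Real.sqrt (2*t) := by
    rw [gf_sqrt ht.le]; ring
  rw [this] at h
  exact h

-- derivative of t ↦ √(2t) * exp(-t/2)
lemma hB' (t : ℝ) (ht : 0 < t) :
    HasDerivAt (fun u : ℝ => Real.sqrt (2*u) * Real.exp (-u/2))
      (Real.exp (-t/2) / Real.sqrt (2*t) - Real.sqrt (2*t) * Real.exp (-t/2) / 2) t := by
  have hexp : HasDerivAt (fun u : ℝ => Real.exp (-u/2)) (Real.exp (-t/2) * (-1/2)) t := by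
    have h1 : HasDerivAt (fun u : ℝ => -u/2) (-1/2 : ℝ) t := by
      simpa using ((hasDerivAt_id t).neg.div_const 2)
    exact (Real.hasDerivAt_exp _).comp t h1
  have h := (hsqrt2t t ht).mul hexp
  refine h.congr_deriv ?_
  ring

lemma hPsi' (t : ℝ) (ht : 0 < t) :
    HasDerivAt (fun u : ℝ => (u-1) * Afun u + Real.sqrt (2*u) * Real.exp (-u/2))
      (Afun t) t := by
  have h1 : HasDerivAt (fun u : ℝ => u - 1) 1 t := by
    simpa using (hasDerivAt_id t).sub_const 1
  have h := (h1.mul (hA' t ht)).add (hB' t ht)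
  refine h.congr_deriv ?_
  have hs := sqrt2t_pos ht
  have hsq := sq_sqrt2t ht
  set s := Real.sqrt (2*t) with hsdef
  have key : t / s = s / 2 := by rw [div_eq_div_iff hs.ne' two_ne_zero]; linear_combination -hsq
  linear_combination (Real.exp (-t/2)) * key

noncomputable def Lval : ℝ := Real.sqrt 2 * Real.exp (-1/2 : ℝ)

lemma sqrt_exp_cont : Continuous (fun u : ℝ => Real.sqrt (2*u) * Real.exp (-u/2)) := by
  fun_prop

lemma integral_A : ∫ t in (0:ℝ)..1, Afun t = Lval := by
  have hcont : ContinuousOn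
      (fun u : ℝ => (u-1) * Afun u + Real.sqrt (2*u) * Real.exp (-u/2)) (Icc 0 1) :=
    (((continuous_id.sub continuous_const).mul A_cont).add sqrt_exp_cont).continuousOn
  have h := intervalIntegral.integral_eq_sub_of_hasDerivAt_of_le (by norm_num : (0:ℝ) ≤ 1)
    hcont (fun t ht => hPsi' t ht.1) (A_cont.intervalIntegrable 0 1)
  rw [h, A_zero]
  unfold Lval
  norm_num

lemma hT' (t : ℝ) (ht : 0 < t) :
    HasDerivAt Tfun (-(Real.exp (-t/2) / Real.sqrt (2*t))) t := by
  have heq : Tfun =ᶠ[nhds t] (fun u => (∫ x in Ioi (0:ℝ), gf x) - Afun u) := by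
    filter_upwards [eventually_gt_nhds ht] with u hu
    exact T_eq_sub u hu.le
  have h : HasDerivAt (fun u => (∫ x in Ioi (0:ℝ), gf x) - Afun u)
      (-(Real.exp (-t/2) / Real.sqrt (2*t))) t := by
    have := (hasDerivAt_const t (∫ x in Ioi (0:ℝ), gf x)).sub (hA' t ht)
    exact this.congr_deriv (by ring)
  exact h.congr_of_eventuallyEq heq

noncomputable def Phi (u : ℝ) : ℝ := (u-1) * Tfun u - Real.sqrt (2*u) * Real.exp (-u/2)

lemma hPhi' (t : ℝ) (ht : 0 < t) : HasDerivAt Phi (Tfun t) t := by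
  have h1 : HasDerivAt (fun u : ℝ => u - 1) 1 t := by
    simpa using (hasDerivAt_id t).sub_const 1
  have h := (h1.mul (hT' t ht)).sub (hB' t ht)
  have heq : 1 * Tfun t + (t-1) * -(Real.exp (-t/2) / Real.sqrt (2*t))
      - (Real.exp (-t/2) / Real.sqrt (2*t) - Real.sqrt (2*t) * Real.exp (-t/2) / 2)
      = Tfun t := by
    have hs := sqrt2t_pos ht
    have hsq := sq_sqrt2t ht
    set s := Real.sqrt (2*t) with hsdef
    have key : t / s = s / 2 := by rw [div_eq_div_iff hs.ne' two_ne_zero]; linear_combination -hsq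
    linear_combination (-(Real.exp (-t/2))) * key
  rw [heq] at h
  exact h

-- bound: Tfun t ≤ 2 * exp(-t/2) / sqrt (2t) for t > 0
lemma xgf_integral (c : ℝ) (hc : 0 < c) :
    IntegrableOn (fun x => x * gf x) (Ioi c) ∧
      (∫ x in Ioi c, x * gf x) = 2 * gf c := by
  have hderiv : ∀ x ∈ Ici c, HasDerivAt (fun y : ℝ => -2 * gf y) (x * gf x) x := by
    intro x _
    have h1 : HasDerivAt (fun y : ℝ => -y^2/4) (-x/2) x := by
      have := ((hasDerivAt_pow 2 x).neg.div_const 4)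
      refine this.congr_deriv ?_
      ring
    have h2 := ((Real.hasDerivAt_exp (-x^2/4)).comp x h1).const_mul (-2 : ℝ)
    have : -2 * (Real.exp (-x^2/4) * (-x/2)) = x * gf x := by unfold gf; ring
    rw [this] at h2
    exact h2
  have htend : Tendsto (fun y : ℝ => -2 * gf y) atTop (nhds 0) := by
    have h0 : Tendsto (fun y : ℝ => -y^2/4) atTop atBot := by
      apply Tendsto.atBot_div_const (by norm_num : (0:ℝ) < 4)
      exact tendsto_neg_atBot_iff.2 (tendsto_pow_atTop (by norm_num))
    have h1 : Tendsto gf atTop (nhds 0) := by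
      unfold gf
      exact Real.tendsto_exp_atBot.comp h0
    have := h1.const_mul (-2 : ℝ)
    simpa using this
  constructor
  · exact integrableOn_Ioi_deriv_of_nonneg
      ((continuous_const.mul gf_cont).continuousWithinAt) (fun x hx => hderiv x (Ioi_subset_Ici_self hx))
      (fun x hx => mul_nonneg (hc.trans hx).le (gf_nonneg x)) htend
  · have := integral_Ioi_of_hasDerivAt_of_nonneg
      ((continuous_const.mul gf_cont).continuousWithinAt) (fun x hx => hderiv x (Ioi_subset_Ici_self hx))
      (fun x hx => mul_nonneg (hc.trans hx).le (gf_nonneg x)) htend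
    rw [this]; simp only [Pi.mul_apply]; ring

lemma T_bound (t : ℝ) (ht : 0 < t) :
    Tfun t ≤ 2 * Real.exp (-t/2) / Real.sqrt (2*t) := by
  have hs := sqrt2t_pos ht
  obtain ⟨hint, hval⟩ := xgf_integral (Real.sqrt (2*t)) hs
  have hmono : Tfun t ≤ ∫ x in Ioi (Real.sqrt (2*t)), (x / Real.sqrt (2*t)) * gf x := by
    unfold Tfun
    have hint2 : IntegrableOn (fun x => (x / Real.sqrt (2*t)) * gf x)
        (Ioi (Real.sqrt (2*t))) :=
      (hint.div_const (Real.sqrt (2*t))).congr (ae_of_all _ fun x => by ring)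
    apply setIntegral_mono_on gf_integrable.integrableOn hint2 measurableSet_Ioi
    intro x hx
    have h1 : 1 ≤ x / Real.sqrt (2*t) := (one_le_div hs).2 (le_of_lt hx)
    nlinarith [gf_nonneg x]
  have h2 : (∫ x in Ioi (Real.sqrt (2*t)), (x / Real.sqrt (2*t)) * gf x)
      = (∫ x in Ioi (Real.sqrt (2*t)), x * gf x) / Real.sqrt (2*t) := by
    rw [← integral_div]
    congr 1 with x
    ring
  rw [h2, hval, gf_sqrt ht.le] at hmono
  exact hmono

lemma aux_tendsto : Tendsto (fun t : ℝ => Real.sqrt (2*t) * Real.exp (-t/2)) atTop (nhds 0) := by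
  have key : Tendsto (fun t : ℝ => t * Real.exp (-t/2)) atTop (nhds 0) := by
    have h := tendsto_pow_mul_exp_neg_atTop_nhds_zero 1
    have h2 : Tendsto (fun t : ℝ => t/2) atTop atTop := tendsto_id.atTop_div_const (by norm_num)
    have h3 := (h.comp h2).const_mul (2:ℝ)
    simp only [Function.comp] at h3
    convert h3 using 2 with t
    · rw [pow_one]; ring_nf
    · norm_num
  apply squeeze_zero' (g := fun t : ℝ => t * Real.exp (-t/2)) ?_ ?_ key
  · filter_upwards [eventually_ge_atTop (0:ℝ)] with t ht
    positivity
  · filter_upwards [eventually_ge_atTop (2:ℝ)] with t ht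
    apply mul_le_mul_of_nonneg_right ?_ (Real.exp_pos _).le
    rw [show (2:ℝ)*t = t*2 by ring]
    calc Real.sqrt (t*2) ≤ Real.sqrt (t*t) := Real.sqrt_le_sqrt (by nlinarith)
    _ = t := by rw [Real.sqrt_mul_self (by linarith)]

lemma Phi_tendsto : Tendsto Phi atTop (nhds 0) := by
  have hsq := aux_tendsto
  have hlow : Tendsto (fun t : ℝ => -(Real.sqrt (2*t) * Real.exp (-t/2))) atTop (nhds 0) := by
    simpa using hsq.neg
  apply tendsto_of_tendsto_of_tendsto_of_le_of_le' hlow tendsto_const_nhds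
  · filter_upwards [eventually_ge_atTop (1:ℝ)] with t ht
    have h1 : 0 ≤ (t-1) * Tfun t := mul_nonneg (by linarith) (T_nonneg t)
    unfold Phi; linarith
  · filter_upwards [eventually_ge_atTop (1:ℝ)] with t ht
    have ht0 : (0:ℝ) < t := by linarith
    have hs := sqrt2t_pos ht0
    have hsq2 := sq_sqrt2t ht0
    have hb := T_bound t ht0
    have h1 : (t-1) * Tfun t ≤ Real.sqrt (2*t) * Real.exp (-t/2) := by
      set s := Real.sqrt (2*t) with hsdef
      have key : t * (2 * Real.exp (-t/2) / s) = s * Real.exp (-t/2) := by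
        have hts : t / s = s / 2 := by rw [div_eq_div_iff hs.ne' two_ne_zero]; linear_combination -hsq2
        linear_combination (2 * Real.exp (-t/2)) * hts
      calc (t-1) * Tfun t ≤ t * Tfun t := by nlinarith [T_nonneg t]
      _ ≤ t * (2 * Real.exp (-t/2) / s) := by
          apply mul_le_mul_of_nonneg_left hb ht0.le
      _ = s * Real.exp (-t/2) := key
    unfold Phi; linarith

lemma T_contWithin : ContinuousWithinAt Phi (Ici 1) 1 :=
  ((hPhi' 1 (by norm_num)).continuousAt).continuousWithinAt

lemma T_integrableOn : IntegrableOn Tfun (Ioi (1:ℝ)) :=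
  integrableOn_Ioi_deriv_of_nonneg T_contWithin
    (fun t ht => hPhi' t (by linarith [mem_Ioi.1 ht]))
    (fun t _ => T_nonneg t) Phi_tendsto

lemma integral_T : (∫ t in Ioi (1:ℝ), Tfun t) = Lval := by
  have h := integral_Ioi_of_hasDerivAt_of_nonneg T_contWithin
    (fun t ht => hPhi' t (by linarith [mem_Ioi.1 ht]))
    (fun t _ => T_nonneg t) Phi_tendsto
  rw [h]
  unfold Phi Lval
  have hT1 : Tfun 1 = Tfun 1 := rfl
  norm_num

lemma sum_sandwich1 (n : ℕ) (hn : 1 ≤ n) :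
    (n:ℝ) * Lval ≤ (∑ k ∈ Finset.Icc 1 n, Afun ((k:ℝ)/(n:ℝ))) ∧
    (∑ k ∈ Finset.Icc 1 n, Afun ((k:ℝ)/(n:ℝ))) ≤ (n:ℝ) * Lval + Afun 1 := by
  have hn0 : (0:ℝ) < (n:ℝ) := by exact_mod_cast hn
  have hmono : Monotone (fun u : ℝ => Afun (u/(n:ℝ))) := fun a b hab =>
    A_mono ((div_le_div_iff_of_pos_right hn0).2 hab)
  have hmonoOn : MonotoneOn (fun u : ℝ => Afun (u/(n:ℝ))) (Icc (0:ℝ) (0 + n)) :=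
    hmono.monotoneOn _
  have hIu := hmonoOn.integral_le_sum
  have hIl := hmonoOn.sum_le_integral
  simp only [zero_add] at hIu hIl
  have hInt : (∫ u in (0:ℝ)..((n:ℕ):ℝ), Afun (u/(n:ℝ))) = (n:ℝ) * Lval := by
    rw [intervalIntegral.integral_comp_div (f := Afun) (c := (n:ℝ)) (ne_of_gt hn0)]
    rw [zero_div, div_self (ne_of_gt hn0), integral_A]
    simp
  rw [hInt] at hIu hIl
  -- rewrite sums
  have hS : (∑ i ∈ Finset.range n, Afun ((((i:ℕ)+1:ℕ):ℝ)/(n:ℝ)))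
      = ∑ k ∈ Finset.Icc 1 n, Afun ((k:ℝ)/(n:ℝ)) := by
    rw [show Finset.Icc 1 n = Finset.Ico 1 (n+1) by rw [Finset.Ico_add_one_right_eq_Icc],
      Finset.sum_Ico_eq_sum_range]
    simp only [Nat.add_sub_cancel]
    apply Finset.sum_congr rfl
    intro i _
    congr 1
    push_cast
    ring
  have hS2 : (∑ i ∈ Finset.range n, Afun (((i:ℕ):ℝ)/(n:ℝ)))
      = (∑ k ∈ Finset.Icc 1 n, Afun ((k:ℝ)/(n:ℝ))) - Afun 1 := by
    rw [← hS]
    have h1 : (∑ i ∈ Finset.range (n+1), Afun (((i:ℕ):ℝ)/(n:ℝ)))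
        = (∑ i ∈ Finset.range n, Afun ((((i:ℕ)+1:ℕ):ℝ)/(n:ℝ)))
          + Afun (((0:ℕ):ℝ)/(n:ℝ)) := by
      rw [Finset.sum_range_succ']
    have h2 : (∑ i ∈ Finset.range (n+1), Afun (((i:ℕ):ℝ)/(n:ℝ)))
        = (∑ i ∈ Finset.range n, Afun (((i:ℕ):ℝ)/(n:ℝ)))
          + Afun (((n:ℕ):ℝ)/(n:ℝ)) := Finset.sum_range_succ _ _
    have h3 : Afun (((0:ℕ):ℝ)/(n:ℝ)) = 0 := by
      norm_num [A_zero]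
    have h4 : Afun (((n:ℕ):ℝ)/(n:ℝ)) = Afun 1 := by
      rw [div_self (ne_of_gt hn0)]
    rw [h4] at h2
    rw [h3] at h1
    linarith
  constructor
  · rw [← hS]; exact hIu
  · rw [hS2] at hIl; linarith

lemma part1 : Tendsto (fun n : ℕ => (1/(n:ℝ)) * ∑ k ∈ Finset.Icc 1 n, Afun ((k:ℝ)/(n:ℝ)))
    atTop (nhds Lval) := by
  have hup : Tendsto (fun n : ℕ => Lval + Afun 1 * (1/(n:ℝ))) atTop (nhds Lval) := by
    have := tendsto_one_div_atTop_nhds_zero_nat.const_mul (Afun 1)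
    have h2 := this.const_add Lval
    simpa using h2
  apply tendsto_of_tendsto_of_tendsto_of_le_of_le' tendsto_const_nhds hup
  · filter_upwards [eventually_ge_atTop 1] with n hn
    have hn0 : (0:ℝ) < (n:ℝ) := by exact_mod_cast hn
    have h := (sum_sandwich1 n hn).1
    rw [show Lval = 1/(n:ℝ) * ((n:ℝ) * Lval) by field_simp]
    exact mul_le_mul_of_nonneg_left h (by positivity)
  · filter_upwards [eventually_ge_atTop 1] with n hn
    have hn0 : (0:ℝ) < (n:ℝ) := by exact_mod_cast hn
    have h := (sum_sandwich1 n hn).2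
    have : 1/(n:ℝ) * (∑ k ∈ Finset.Icc 1 n, Afun ((k:ℝ)/(n:ℝ)))
        ≤ 1/(n:ℝ) * ((n:ℝ) * Lval + Afun 1) := by
      apply mul_le_mul_of_nonneg_left h (by positivity)
    calc 1/(n:ℝ) * (∑ k ∈ Finset.Icc 1 n, Afun ((k:ℝ)/(n:ℝ)))
        ≤ 1/(n:ℝ) * ((n:ℝ) * Lval + Afun 1) := this
    _ = Lval + Afun 1 * (1/(n:ℝ)) := by field_simp

lemma interval_le_Ioi (b : ℝ) (hb : 1 ≤ b) : (∫ t in (1:ℝ)..b, Tfun t) ≤ Lval := by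
  rw [← integral_T, intervalIntegral.integral_of_le hb]
  apply setIntegral_mono_set T_integrableOn (ae_of_all _ T_nonneg)
  exact HasSubset.Subset.eventuallyLE Ioc_subset_Ioi_self

lemma sum_sandwich2 (n : ℕ) (hn : 1 ≤ n) :
    Summable (fun j : ℕ => Tfun (((n:ℝ)+(j:ℝ))/(n:ℝ))) ∧
    (n:ℝ) * Lval ≤ (∑' j : ℕ, Tfun (((n:ℝ)+(j:ℝ))/(n:ℝ))) ∧
    (∑' j : ℕ, Tfun (((n:ℝ)+(j:ℝ))/(n:ℝ))) ≤ (n:ℝ) * Lval + Tfun 1 := by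
  have hn0 : (0:ℝ) < (n:ℝ) := by exact_mod_cast hn
  set u : ℕ → ℝ := fun j => Tfun (((n:ℝ)+(j:ℝ))/(n:ℝ)) with hu
  have hanti : Antitone (fun v : ℝ => Tfun (v/(n:ℝ))) := fun a b hab =>
    T_anti ((div_le_div_iff_of_pos_right hn0).2 hab)
  have hunn : ∀ j, 0 ≤ u j := fun j => T_nonneg _
  have hInt : ∀ N : ℕ, (∫ v in ((n:ℝ))..((n:ℝ) + (N:ℕ)), Tfun (v/(n:ℝ)))
      = (n:ℝ) * ∫ t in (1:ℝ)..(((n:ℝ)+(N:ℝ))/(n:ℝ)), Tfun t := by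
    intro N
    rw [intervalIntegral.integral_comp_div (f := Tfun) (c := (n:ℝ)) (ne_of_gt hn0),
      div_self (ne_of_gt hn0)]
    simp
  have hbound : ∀ N : ℕ, 1 ≤ ((n:ℝ)+(N:ℝ))/(n:ℝ) := by
    intro N
    rw [le_div_iff₀ hn0]
    have : (0:ℝ) ≤ (N:ℝ) := Nat.cast_nonneg N
    linarith
  -- upper: partial sums of shifted sequence
  have hupN : ∀ N : ℕ, (∑ i ∈ Finset.range N, u (i+1)) ≤ (n:ℝ) * Lval := by
    intro N
    have h := (hanti.antitoneOn (Icc ((n:ℝ)) ((n:ℝ) + (N:ℕ)))).sum_le_integral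
    rw [hInt N] at h
    have h2 : (∑ i ∈ Finset.range N, u (i+1)) =
        ∑ i ∈ Finset.range N, Tfun (((n:ℝ) + ((i:ℕ)+1:ℕ))/(n:ℝ)) := by
      apply Finset.sum_congr rfl
      intro i _
      simp only [u]
    rw [h2]
    calc _ ≤ (n:ℝ) * ∫ t in (1:ℝ)..(((n:ℝ)+(N:ℝ))/(n:ℝ)), Tfun t := h
    _ ≤ (n:ℝ) * Lval := by
        apply mul_le_mul_of_nonneg_left (interval_le_Ioi _ (hbound N)) hn0.le
  have hsum' : Summable (fun j => u (j+1)) :=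
    summable_of_sum_range_le (fun j => hunn _) hupN
  have hsum : Summable u := by
    rwa [← summable_nat_add_iff 1]
  have htsum' : (∑' j, u (j+1)) ≤ (n:ℝ) * Lval :=
    Real.tsum_le_of_sum_range_le (fun j => hunn _) hupN
  have hzero : (∑' j, u j) = u 0 + ∑' j, u (j+1) := Summable.tsum_eq_zero_add hsum
  have hu0 : u 0 = Tfun 1 := by
    unfold u
    norm_num [div_self (ne_of_gt hn0)]
  refine ⟨hsum, ?_, ?_⟩
  · -- lower bound
    have hlowN : ∀ N : ℕ, (n:ℝ) * ∫ t in (1:ℝ)..(((n:ℝ)+(N:ℝ))/(n:ℝ)), Tfun t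
        ≤ ∑' j, u j := by
      intro N
      have h := (hanti.antitoneOn (Icc ((n:ℝ)) ((n:ℝ) + (N:ℕ)))).integral_le_sum
      rw [hInt N] at h
      have h2 : (∑ i ∈ Finset.range N, Tfun (((n:ℝ) + (i:ℕ))/(n:ℝ)))
          = ∑ i ∈ Finset.range N, u i := rfl
      calc (n:ℝ) * ∫ t in (1:ℝ)..(((n:ℝ)+(N:ℝ))/(n:ℝ)), Tfun t
          ≤ ∑ i ∈ Finset.range N, Tfun (((n:ℝ) + (i:ℕ))/(n:ℝ)) := h
      _ = ∑ i ∈ Finset.range N, u i := h2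
      _ ≤ ∑' j, u j := Summable.sum_le_tsum _ (fun j _ => hunn j) hsum
    have htend : Tendsto (fun N : ℕ => (n:ℝ) * ∫ t in (1:ℝ)..(((n:ℝ)+(N:ℝ))/(n:ℝ)), Tfun t)
        atTop (nhds ((n:ℝ) * Lval)) := by
      apply Tendsto.const_mul
      rw [← integral_T]
      apply intervalIntegral_tendsto_integral_Ioi 1 T_integrableOn
      have h1 : Tendsto (fun N : ℕ => (n:ℝ) + (N:ℝ)) atTop atTop :=
        tendsto_atTop_add_const_left _ _ tendsto_natCast_atTop_atTop
      exact h1.atTop_div_const hn0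
    exact le_of_tendsto htend (Filter.Eventually.of_forall hlowN)
  · rw [hzero, hu0]; linarith

lemma part2 : Tendsto (fun n : ℕ => (1/(n:ℝ)) * ∑' j : ℕ, Tfun (((n:ℝ)+(j:ℝ))/(n:ℝ)))
    atTop (nhds Lval) := by
  have hup : Tendsto (fun n : ℕ => Lval + Tfun 1 * (1/(n:ℝ))) atTop (nhds Lval) := by
    have := tendsto_one_div_atTop_nhds_zero_nat.const_mul (Tfun 1)
    have h2 := this.const_add Lval
    simpa using h2
  apply tendsto_of_tendsto_of_tendsto_of_le_of_le' tendsto_const_nhds hup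
  · filter_upwards [eventually_ge_atTop 1] with n hn
    have hn0 : (0:ℝ) < (n:ℝ) := by exact_mod_cast hn
    have h := (sum_sandwich2 n hn).2.1
    rw [show Lval = 1/(n:ℝ) * ((n:ℝ) * Lval) by field_simp]
    exact mul_le_mul_of_nonneg_left h (by positivity)
  · filter_upwards [eventually_ge_atTop 1] with n hn
    have hn0 : (0:ℝ) < (n:ℝ) := by exact_mod_cast hn
    have h := (sum_sandwich2 n hn).2.2
    calc 1/(n:ℝ) * (∑' j : ℕ, Tfun (((n:ℝ)+(j:ℝ))/(n:ℝ)))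
        ≤ 1/(n:ℝ) * ((n:ℝ) * Lval + Tfun 1) := mul_le_mul_of_nonneg_left h (by positivity)
    _ = Lval + Tfun 1 * (1/(n:ℝ)) := by field_simp

theorem riemann_sum_limits_equal :
    ∃ L : ℝ,
      Filter.Tendsto
        (fun n : ℕ => (1/(n:ℝ)) * ∑ k ∈ Finset.Icc 1 n,
          ∫ x in (0:ℝ)..(Real.sqrt (2*k/(n:ℝ))), Real.exp (-x^2/4))
        Filter.atTop (nhds L) ∧
      Filter.Tendsto
        (fun n : ℕ => (1/(n:ℝ)) * ∑' j : ℕ,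
          ∫ x in Ioi (Real.sqrt (2*((n:ℝ)+j)/(n:ℝ))), Real.exp (-x^2/4))
        Filter.atTop (nhds L) := by
  refine ⟨Lval, ?_, ?_⟩
  · have h := part1
    convert h using 3 with n
    apply Finset.sum_congr rfl
    intro k _
    unfold Afun Efun gf
    rw [mul_div_assoc]
  · have h := part2
    convert h using 3 with n
    apply tsum_congr
    intro j
    unfold Tfun gf
    rw [mul_div_assoc]
end
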